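/- Let Y and Y' be square-integrable real random variables on a common probability space and σ > 0. Then E[ d_TV( N(Y, σ²), N(Y', σ²) ) ] ≤ √( E[(Y − Y')²] / (2πσ²) ). In particular, if E[(Y − Y')²] ≤ 2a·s^γ for constants a ≥ 0, s ≥ 0, γ ≥ 0 (as holds for noisy Gaussian process observations at inputs x, x' with |x − x'| = s and kernel k satisfying k(0) − k(s) ≤ a·s^γ), then E[ d_TV( N(Y, σ²), N(Y', σ²) ) ] ≤ √(2a/(πσ²)) · s^{γ/2}. -/

import Mathlib

open MeasureTheory ProbabilityTheory

/-- Total variation distance between two measures: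
`sup_{A measurable} |μ(A) − ν(A)|`. -/
noncomputable def tvDist {𝒴 : Type*} [MeasurableSpace 𝒴] (μ ν : Measure 𝒴) : ℝ :=
  ⨆ A : {A : Set 𝒴 // MeasurableSet A}, |(μ A.1).toReal - (ν A.1).toReal|

open Real Set
open scoped NNReal ENNReal

lemma tvDist_nonneg {𝒴 : Type*} [MeasurableSpace 𝒴] (μ ν : Measure 𝒴) :
    0 ≤ tvDist μ ν :=
  Real.iSup_nonneg fun _ => abs_nonneg _

lemma gaussPDF_le (m : ℝ) (v : ℝ≥0) (x : ℝ) :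
    gaussianPDFReal m v x ≤ (Real.sqrt (2 * Real.pi * v))⁻¹ := by
  rw [gaussianPDFReal]
  nth_rewrite 2 [← mul_one ((Real.sqrt (2 * Real.pi * v))⁻¹)]
  refine mul_le_mul_of_nonneg_left ?_ (by positivity)
  rw [← Real.exp_zero]
  apply Real.exp_le_exp.mpr
  apply div_nonpos_of_nonpos_of_nonneg
  · simp [sq_nonneg]
  · positivity

lemma oneSided (m m' : ℝ) (v : ℝ≥0) (hv : v ≠ 0) (h : m' ≤ m)
    (A : Set ℝ) (hA : MeasurableSet A) :
    ((gaussianReal m v) A).toReal - ((gaussianReal m' v) A).toReal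
      ≤ (m - m') * (Real.sqrt (2 * Real.pi * v))⁻¹ := by
  have hv' : (0:ℝ) < v := by
    have := pos_iff_ne_zero.mpr hv
    exact_mod_cast this
  set f := gaussianPDFReal m v with hf
  set g := gaussianPDFReal m' v with hg
  set c : ℝ := (m + m') / 2 with hc
  set t : ℝ := m - m' with ht
  have ht0 : 0 ≤ t := by simp [ht, h]
  have htoReal : ∀ (μ : ℝ) (s : Set ℝ),
      ((gaussianReal μ v) s).toReal = ∫ x in s, gaussianPDFReal μ v x := by
    intro μ s
    rw [gaussianReal_apply_eq_integral _ hv,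
      ENNReal.toReal_ofReal (integral_nonneg fun x => gaussianPDFReal_nonneg _ _ _)]
  have hint : ∀ (μ : ℝ) (s : Set ℝ), IntegrableOn (gaussianPDFReal μ v) s :=
    fun μ s => (integrable_gaussianPDFReal μ v).integrableOn
  -- sign facts
  have hsign1 : ∀ x ∈ Ici c, g x ≤ f x := by
    intro x hx
    simp only [hf, hg, gaussianPDFReal]
    refine mul_le_mul_of_nonneg_left (Real.exp_le_exp.mpr ?_) (by positivity)
    have hx' : c ≤ x := hx
    rw [div_le_div_iff_of_pos_right (by linarith)]
    nlinarith [hx']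
  have hsign2 : ∀ x ∈ (Ici c)ᶜ, f x ≤ g x := by
    intro x hx
    simp only [hf, hg, gaussianPDFReal]
    refine mul_le_mul_of_nonneg_left (Real.exp_le_exp.mpr ?_) (by positivity)
    have hx' : x ≤ c := le_of_lt (by simpa using hx)
    rw [div_le_div_iff_of_pos_right (by linarith)]
    nlinarith [hx']
  -- Step 1 : reduce to Ici c
  have step1 : (∫ x in A, f x) - (∫ x in A, g x)
      ≤ (∫ x in Ici c, f x) - (∫ x in Ici c, g x) := by
    have hd : ∀ s : Set ℝ, (∫ x in s, f x) - (∫ x in s, g x) = ∫ x in s, (f x - g x) :=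
      fun s => (integral_sub (hint m s) (hint m' s)).symm
    rw [hd A, hd (Ici c)]
    have hsplit : (∫ x in A ∩ Ici c, (f x - g x)) + (∫ x in A \ Ici c, (f x - g x))
        = ∫ x in A, (f x - g x) :=
      integral_inter_add_diff measurableSet_Ici ((hint m A).sub (hint m' A))
    have h1 : (∫ x in A \ Ici c, (f x - g x)) ≤ 0 := by
      apply setIntegral_nonpos (hA.diff measurableSet_Ici)
      intro x hx
      exact sub_nonpos.mpr (hsign2 x hx.2)
    have h2 : (∫ x in A ∩ Ici c, (f x - g x)) ≤ ∫ x in Ici c, (f x - g x) := by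
      apply setIntegral_mono_set ((hint m _).sub (hint m' _))
      · filter_upwards [ae_restrict_mem measurableSet_Ici] with x hx
        exact sub_nonneg.mpr (hsign1 x hx)
      · exact Filter.Eventually.of_forall fun x hx => hx.2
    linarith
  -- Step 2 : translate
  have hmap : Measure.map (· + t) (gaussianReal m' v) = gaussianReal m v := by
    rw [gaussianReal_map_add_const]
    congr 1
    simp [ht]
  have step2 : (gaussianReal m v) (Ici c) = (gaussianReal m' v) (Ici (c - t)) := by
    rw [← hmap, Measure.map_apply (measurable_add_const t) measurableSet_Ici,
      preimage_add_const_Ici]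
  -- Step 3 : split interval
  have step3 : (gaussianReal m' v) (Ici (c - t))
      = (gaussianReal m' v) (Ico (c - t) c) + (gaussianReal m' v) (Ici c) := by
    have hdisj : Disjoint (Ico (c - t) c) (Ici c) := by
      rw [Set.disjoint_left]
      rintro x ⟨_, h2⟩ h3
      exact h2.not_ge h3
    rw [← measure_union hdisj measurableSet_Ici,
      Ico_union_Ici_eq_Ici (by linarith)]
  -- Step 4 : bound the small interval
  have step4 : ((gaussianReal m' v) (Ico (c - t) c)).toReal
      ≤ t * (Real.sqrt (2 * Real.pi * v))⁻¹ := by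
    rw [htoReal]
    calc (∫ x in Ico (c - t) c, g x)
        ≤ (Real.sqrt (2 * Real.pi * v))⁻¹ * (volume (Ico (c - t) c)).toReal := by
          have hb : ‖∫ x in Ico (c - t) c, g x‖
              ≤ (Real.sqrt (2 * Real.pi * v))⁻¹ * (volume (Ico (c - t) c)).toReal := by
            refine norm_setIntegral_le_of_norm_le_const measure_Ico_lt_top ?_
            intro x _
            rw [Real.norm_of_nonneg (gaussianPDFReal_nonneg _ _ _)]
            exact gaussPDF_le m' v x
          exact le_trans (Real.le_norm_self _) hb
      _ = t * (Real.sqrt (2 * Real.pi * v))⁻¹ := by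
          rw [Real.volume_Ico, ENNReal.toReal_ofReal (by linarith)]
          ring_nf
  -- combine
  rw [htoReal, htoReal]
  refine step1.trans ?_
  rw [← htoReal, ← htoReal, step2, step3,
    ENNReal.toReal_add (measure_ne_top _ _) (measure_ne_top _ _)]
  calc ((gaussianReal m' v) (Ico (c - t) c)).toReal + ((gaussianReal m' v) (Ici c)).toReal
        - ((gaussianReal m' v) (Ici c)).toReal
      = ((gaussianReal m' v) (Ico (c - t) c)).toReal := by ring
    _ ≤ (m - m') * (Real.sqrt (2 * Real.pi * v))⁻¹ := by rw [← ht]; exact step4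

lemma absBound (m m' : ℝ) (v : ℝ≥0) (hv : v ≠ 0) (h : m' ≤ m)
    (A : Set ℝ) (hA : MeasurableSet A) :
    |((gaussianReal m v) A).toReal - ((gaussianReal m' v) A).toReal|
      ≤ (m - m') * (Real.sqrt (2 * Real.pi * v))⁻¹ := by
  have hcompl : ∀ mm : ℝ,
      ((gaussianReal mm v) Aᶜ).toReal = 1 - ((gaussianReal mm v) A).toReal := by
    intro mm
    rw [measure_compl hA (measure_ne_top _ _), measure_univ,
      ENNReal.toReal_sub_of_le prob_le_one ENNReal.one_ne_top, ENNReal.toReal_one]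
  have h1 := oneSided m m' v hv h A hA
  have h2 := oneSided m m' v hv h Aᶜ hA.compl
  rw [hcompl, hcompl] at h2
  rw [abs_le]
  constructor <;> linarith

lemma tv_le (m m' : ℝ) (v : ℝ≥0) (hv : v ≠ 0) :
    tvDist (gaussianReal m v) (gaussianReal m' v)
      ≤ |m - m'| * (Real.sqrt (2 * Real.pi * v))⁻¹ := by
  have hne : Nonempty {A : Set ℝ // MeasurableSet A} := ⟨⟨∅, MeasurableSet.empty⟩⟩
  refine ciSup_le fun A => ?_
  rcases le_total m' m with h | h
  · rw [abs_of_nonneg (sub_nonneg.mpr h)]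
    exact absBound m m' v hv h A.1 A.2
  · rw [abs_sub_comm m m', abs_of_nonneg (sub_nonneg.mpr h),
      abs_sub_comm]
    exact absBound m' m v hv h A.1 A.2

lemma L1_le_L2 {Ω : Type*} [MeasurableSpace Ω] (P : Measure Ω) [IsProbabilityMeasure P]
    (f : Ω → ℝ) (hf : MemLp f 2 P) :
    (∫ ω, |f ω| ∂P) ≤ Real.sqrt (∫ ω, (f ω) ^ 2 ∂P) := by
  have hpq : (2:ℝ).HolderConjugate 2 := Real.HolderConjugate.two_two
  have hmem : MemLp (fun ω => |f ω|) (ENNReal.ofReal 2) P := by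
    have : (ENNReal.ofReal 2) = 2 := by norm_num
    rw [this]
    exact hf.abs
  have hone : MemLp (fun _ : Ω => (1:ℝ)) (ENNReal.ofReal 2) P := memLp_const 1
  have h := integral_mul_le_Lp_mul_Lq_of_nonneg hpq
    (Filter.Eventually.of_forall fun ω => abs_nonneg (f ω))
    (Filter.Eventually.of_forall fun _ => zero_le_one) hmem hone
  simp only [mul_one] at h
  have e1 : ∫ ω, |f ω| ^ (2:ℝ) ∂P = ∫ ω, (f ω) ^ 2 ∂P := by
    congr 1
    ext ω
    rw [Real.rpow_two, sq_abs]
  have e2 : ∫ ω, (1:ℝ) ^ (2:ℝ) ∂P = 1 := by simp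
  rw [e1, e2] at h
  rw [Real.sqrt_eq_rpow]
  simpa using h

/-- for square-integrable real random variables `Y, Y'` and `σ > 0`,
`E[d_TV(N(Y,σ²), N(Y',σ²))] ≤ √(E[(Y−Y')²]/(2πσ²))`; in particular, if
`E[(Y−Y')²] ≤ 2a·s^γ` then `E[d_TV(N(Y,σ²), N(Y',σ²))] ≤ √(2a/(πσ²))·s^{γ/2}`. -/
theorem stmt19
    {Ω : Type*} [MeasurableSpace Ω]
    (P : Measure Ω) [IsProbabilityMeasure P]
    (Y Y' : Ω → ℝ) (hY : Measurable Y) (hY' : Measurable Y')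
    (hY2 : MemLp Y 2 P) (hY'2 : MemLp Y' 2 P)
    (σ : ℝ) (hσ : 0 < σ) :
    (∫ ω, tvDist (gaussianReal (Y ω) (Real.toNNReal (σ ^ 2)))
                 (gaussianReal (Y' ω) (Real.toNNReal (σ ^ 2))) ∂P)
        ≤ Real.sqrt ((∫ ω, (Y ω - Y' ω) ^ 2 ∂P) / (2 * Real.pi * σ ^ 2))
      ∧ ∀ a s γ : ℝ, 0 ≤ a → 0 ≤ s → 0 ≤ γ →
          (∫ ω, (Y ω - Y' ω) ^ 2 ∂P) ≤ 2 * a * s ^ γ →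
          (∫ ω, tvDist (gaussianReal (Y ω) (Real.toNNReal (σ ^ 2)))
                       (gaussianReal (Y' ω) (Real.toNNReal (σ ^ 2))) ∂P)
            ≤ Real.sqrt (2 * a / (Real.pi * σ ^ 2)) * s ^ (γ / 2) := by
  have hπ := Real.pi_pos
  set E := ∫ ω, (Y ω - Y' ω) ^ 2 ∂P with hEdef
  have hE0 : 0 ≤ E := integral_nonneg fun ω => sq_nonneg _
  have hv : (σ ^ 2).toNNReal ≠ 0 := by
    rw [Ne, Real.toNNReal_eq_zero]
    push_neg
    positivity
  have hvr : ((σ ^ 2).toNNReal : ℝ) = σ ^ 2 := Real.coe_toNNReal _ (sq_nonneg σ)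
  set C : ℝ := (Real.sqrt (2 * Real.pi * σ ^ 2))⁻¹ with hCdef
  have hC0 : 0 ≤ C := by positivity
  have hsub : MemLp (fun ω => Y ω - Y' ω) 2 P := hY2.sub hY'2
  have key : (∫ ω, tvDist (gaussianReal (Y ω) (Real.toNNReal (σ ^ 2)))
                 (gaussianReal (Y' ω) (Real.toNNReal (σ ^ 2))) ∂P)
      ≤ Real.sqrt (E / (2 * Real.pi * σ ^ 2)) := by
    have hint2 : Integrable (fun ω => |Y ω - Y' ω| * C) P :=
      ((hsub.integrable one_le_two).abs).mul_const C
    have h1 : (∫ ω, tvDist (gaussianReal (Y ω) (Real.toNNReal (σ ^ 2)))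
                 (gaussianReal (Y' ω) (Real.toNNReal (σ ^ 2))) ∂P)
        ≤ ∫ ω, |Y ω - Y' ω| * C ∂P := by
      refine integral_mono_of_nonneg (Filter.Eventually.of_forall fun ω => tvDist_nonneg _ _)
        hint2 (Filter.Eventually.of_forall fun ω => ?_)
      have := tv_le (Y ω) (Y' ω) (σ ^ 2).toNNReal hv
      rwa [hvr] at this
    have h2 : (∫ ω, |Y ω - Y' ω| ∂P) ≤ Real.sqrt E :=
      L1_le_L2 P (fun ω => Y ω - Y' ω) hsub
    calc (∫ ω, tvDist (gaussianReal (Y ω) (Real.toNNReal (σ ^ 2)))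
                 (gaussianReal (Y' ω) (Real.toNNReal (σ ^ 2))) ∂P)
        ≤ ∫ ω, |Y ω - Y' ω| * C ∂P := h1
      _ = (∫ ω, |Y ω - Y' ω| ∂P) * C := integral_mul_const _ _
      _ ≤ Real.sqrt E * C := mul_le_mul_of_nonneg_right h2 hC0
      _ = Real.sqrt (E / (2 * Real.pi * σ ^ 2)) := by
          rw [Real.sqrt_div hE0, div_eq_mul_inv]
  refine ⟨key, fun a s γ ha hs hγ hEle => ?_⟩
  have hsγ : 0 ≤ s ^ γ := Real.rpow_nonneg hs γ
  calc (∫ ω, tvDist (gaussianReal (Y ω) (Real.toNNReal (σ ^ 2)))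
                 (gaussianReal (Y' ω) (Real.toNNReal (σ ^ 2))) ∂P)
      ≤ Real.sqrt (E / (2 * Real.pi * σ ^ 2)) := key
    _ ≤ Real.sqrt ((2 * a / (Real.pi * σ ^ 2)) * s ^ γ) := by
        apply Real.sqrt_le_sqrt
        rw [div_le_iff₀ (by positivity)]
        have heq : (2 * a / (Real.pi * σ ^ 2)) * s ^ γ * (2 * Real.pi * σ ^ 2)
            = 4 * (a * s ^ γ) := by
          field_simp
          ring
        rw [heq]
        nlinarith [mul_nonneg ha hsγ]
    _ = Real.sqrt (2 * a / (Real.pi * σ ^ 2)) * s ^ (γ / 2) := by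
        rw [Real.sqrt_mul (by positivity)]
        congr 1
        rw [Real.sqrt_eq_rpow, ← Real.rpow_mul hs]
        congr 1
        ring
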